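/- For j = 1, 2, ..., k, let A_j be an n_j×n_j real symmetric matrix with eigenvalues λ_{1j}, λ_{2j}, ..., λ_{n_j j} counted with multiplicity, and suppose for each j the vector u_j is a unit eigenvector of A_j corresponding to λ_{1j}. Then for any real constants ρ_{pq} (1 ≤ p, q ≤ k) satisfying ρ_{qp} = ρ_{pq}, the symmetric block matrix B whose (p,p) diagonal block is A_p + ρ_{pp} u_p u_pᵀ and whose (p,q) off-diagonal block (p ≠ q) is ρ_{pq} u_p u_qᵀ has eigenvalues λ_{21}, ..., λ_{n₁1}, λ_{22}, ..., λ_{n₂2}, ..., λ_{2k}, ..., λ_{n_k k}, γ₁, ..., γ_k (counted with multiplicity), where γ₁, ..., γ_k are the eigenvalues of the k×k symmetric matrix B̂ whose (p,p) entry is λ_{1p} + ρ_{pp} and whose (p,q) entry (p ≠ q) is ρ_{pq}. -/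

import Mathlib

open Matrix Polynomial

def unitSumEquiv (m : ℕ) : (Unit ⊕ Fin m) ≃ Fin (m+1) where
  toFun := Sum.elim (fun _ => 0) Fin.succ
  invFun := Fin.cases (Sum.inl ()) Sum.inr
  left_inv := by rintro (⟨⟩|i) <;> simp
  right_inv := by
    intro i
    induction i using Fin.cases <;> simp

lemma charpoly_conj {m : Type*} [Fintype m] [DecidableEq m]
    (Q N : Matrix m m ℝ) (hQ : Qᵀ * Q = 1) :
    (Qᵀ * N * Q).charpoly = N.charpoly := by
  set f := (C : ℝ →+* ℝ[X])
  have hmap : (Qᵀ.map f) * (Q.map f) = 1 := by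
    rw [← Matrix.map_mul, hQ, Matrix.map_one f (map_zero f) (map_one f)]
  have hd : (Qᵀ.map f) * (diagonal fun _ => (X:ℝ[X])) * (Q.map f)
      = diagonal fun _ => (X:ℝ[X]) := by
    rw [← Matrix.smul_one_eq_diagonal, mul_smul_comm, smul_mul_assoc, mul_one, hmap]
  have hch : charmatrix (Qᵀ * N * Q) = (Qᵀ.map f) * charmatrix N * (Q.map f) := by
    rw [charmatrix, charmatrix, Matrix.mul_sub, Matrix.sub_mul, scalar_apply, hd]
    congr 1
    simp only [RingHom.mapMatrix_apply, Matrix.map_mul, Matrix.transpose_map, f]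
  rw [Matrix.charpoly, hch, det_mul, det_mul, Matrix.charpoly]
  have h1 : (Qᵀ.map f).det * (Q.map f).det = 1 := by
    rw [← det_mul, hmap, det_one]
  calc (Qᵀ.map f).det * (charmatrix N).det * (Q.map f).det
      = (Qᵀ.map f).det * (Q.map f).det * (charmatrix N).det := by ring
    _ = (charmatrix N).det := by rw [h1, one_mul]

lemma exists_orthogonal (m : ℕ) (u : Fin (m+1) → ℝ) (hu : ∑ i, u i ^ 2 = 1) :
    ∃ Q : Matrix (Fin (m+1)) (Fin (m+1)) ℝ, Qᵀ * Q = 1 ∧ ∀ i, Q i 0 = u i := by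
  classical
  let E := EuclideanSpace ℝ (Fin (m+1))
  let u' : E := (WithLp.equiv 2 (Fin (m+1) → ℝ)).symm u
  let v : Fin (m+1) → E := fun _ => u'
  have hcard : Module.finrank ℝ E = Fintype.card (Fin (m+1)) := by
    simp [E]
  have horth : Orthonormal ℝ (({0} : Set (Fin (m+1))).restrict v) := by
    rw [orthonormal_iff_ite]
    rintro ⟨i, hi⟩ ⟨j, hj⟩
    simp only [Set.mem_singleton_iff] at hi hj
    subst hi; subst hj
    simp only [if_pos rfl, Set.restrict_apply]
    show (inner ℝ u' u' : ℝ) = 1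
    rw [PiLp.inner_apply]
    simpa [u', pow_two] using hu
  obtain ⟨b, hb⟩ := horth.exists_orthonormalBasis_extension_of_card_eq hcard
  have hb0 : b 0 = u' := hb 0 rfl
  refine ⟨Matrix.of fun i j => b j i, ?_, ?_⟩
  · ext i j
    have := orthonormal_iff_ite.mp b.orthonormal i j
    rw [PiLp.inner_apply] at this
    simp only [Matrix.mul_apply, transpose_apply, of_apply, Matrix.one_apply]
    simpa [mul_comm] using this
  · intro i
    simp only [of_apply, hb0]
    rfl

lemma block_reduce (m : ℕ) (A : Matrix (Fin (m+1)) (Fin (m+1)) ℝ) (hA : A.IsSymm)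
    (lam : ℝ) (u : Fin (m+1) → ℝ) (heig : A *ᵥ u = lam • u) (hnorm : ∑ i, u i ^ 2 = 1) :
    ∃ Q : Matrix (Fin (m+1)) (Fin (m+1)) ℝ, Qᵀ * Q = 1 ∧ (∀ i, Q i 0 = u i) ∧
      (Qᵀ * A * Q).IsSymm ∧
      (∀ i, (Qᵀ * A * Q) i 0 = if i = 0 then lam else 0) ∧
      A.charpoly.roots
        = lam ::ₘ ((Qᵀ * A * Q).submatrix Fin.succ Fin.succ).charpoly.roots := by
  classical
  obtain ⟨Q, hQ, hQcol⟩ := exists_orthogonal m u hnorm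
  set M := Qᵀ * A * Q with hM
  have hsymm : M.IsSymm := by
    rw [Matrix.IsSymm, hM, transpose_mul, transpose_mul, transpose_transpose, hA.eq,
      Matrix.mul_assoc]
  have h1 : ∀ i, (Qᵀ *ᵥ u) i = (1 : Matrix (Fin (m+1)) (Fin (m+1)) ℝ) i 0 := by
    intro i
    rw [← hQ, Matrix.mul_apply]
    simp only [Matrix.mulVec, dotProduct, transpose_apply, hQcol]
  have hcol : ∀ i, M i 0 = if i = 0 then lam else 0 := by
    intro i
    have : M *ᵥ Pi.single 0 1 = fun i => M i 0 := by
      rw [mulVec_single]; funext i; simp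
    have h2 : M *ᵥ Pi.single 0 1 = lam • fun i => (1 : Matrix (Fin (m+1)) (Fin (m+1)) ℝ) i 0 := by
      have hQe : Q *ᵥ Pi.single 0 1 = u := by
        rw [mulVec_single]; funext i; simp [hQcol]
      rw [hM, ← Matrix.mulVec_mulVec, ← Matrix.mulVec_mulVec, hQe, heig, mulVec_smul]
      congr 1
      funext i
      exact h1 i
    have h3 := congrFun (this.symm.trans h2) i
    simp only [Pi.smul_apply, smul_eq_mul] at h3
    rw [h3, Matrix.one_apply]
    split <;> simp
  refine ⟨Q, hQ, hQcol, hsymm, hcol, ?_⟩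
  have hcp : M.charpoly = A.charpoly := charpoly_conj Q A hQ
  set Cm := M.submatrix Fin.succ Fin.succ with hCm
  have hsub : M.submatrix (unitSumEquiv m) (unitSumEquiv m)
      = fromBlocks (Matrix.of fun _ _ => lam) 0 0 Cm := by
    ext x y
    rcases x with x | i <;> rcases y with y | j
    · simp [unitSumEquiv, hcol 0]
    · have := hsymm.apply (unitSumEquiv m (Sum.inr j)) 0
      simp only [unitSumEquiv, Equiv.coe_fn_mk, Sum.elim_inr] at this
      simp only [submatrix_apply, unitSumEquiv, Equiv.coe_fn_mk, Sum.elim_inl,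
        Sum.elim_inr, fromBlocks_apply₁₂]
      rw [this, hcol]
      simp [Fin.succ_ne_zero]
    · simp [unitSumEquiv, hcol i.succ, Fin.succ_ne_zero]
    · simp [unitSumEquiv, hCm]
  have hre : (M.submatrix (unitSumEquiv m) (unitSumEquiv m)).charpoly = M.charpoly := by
    have := Matrix.charpoly_reindex (R := ℝ) (unitSumEquiv m).symm M
    rwa [reindex_apply, Equiv.symm_symm] at this
  have hone : (Matrix.of fun (_ _ : Unit) => lam).charpoly = X - C lam := by
    rw [Matrix.charpoly, det_unique]
    simp [charmatrix_apply]
  have hXlam : (X - C lam) ≠ (0 : ℝ[X]) := X_sub_C_ne_zero lam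
  have hCmne : Cm.charpoly ≠ 0 := Cm.charpoly_monic.ne_zero
  calc A.charpoly.roots = M.charpoly.roots := by rw [hcp]
    _ = ((X - C lam) * Cm.charpoly).roots := by
        rw [← hre, hsub, Matrix.charpoly_fromBlocks_zero₂₁, hone]
    _ = lam ::ₘ Cm.charpoly.roots := by
        rw [roots_mul (mul_ne_zero hXlam hCmne), roots_X_sub_C,
          Multiset.singleton_add]

def blockEquiv {k : ℕ} (n : Fin k → ℕ) (a : Fin k) :
    {x : (j : Fin k) × Fin (n j) // x.1 = a} ≃ Fin (n a) where
  toFun x := Fin.cast (congrArg n x.2) x.1.2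
  invFun i := ⟨⟨a, i⟩, rfl⟩
  left_inv := by rintro ⟨⟨b, i⟩, rfl⟩; rfl
  right_inv i := rfl

lemma charpoly_blockDiagonal' {k : ℕ} {n : Fin k → ℕ}
    (D : ∀ j, Matrix (Fin (n j)) (Fin (n j)) ℝ) :
    (blockDiagonal' D).charpoly = ∏ j, (D j).charpoly := by
  classical
  have h1 : charmatrix (blockDiagonal' D) = blockDiagonal' fun j => charmatrix (D j) := by
    ext x y
    rcases x with ⟨p, i⟩
    rcases y with ⟨q, i'⟩
    by_cases h : p = q
    · subst h
      rw [blockDiagonal'_apply_eq]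
      by_cases h2 : i = i'
      · subst h2
        rw [charmatrix_apply_eq, charmatrix_apply_eq, blockDiagonal'_apply_eq]
      · have hne : (⟨p, i⟩ : (j : Fin k) × Fin (n j)) ≠ ⟨p, i'⟩ := by
          simp [Sigma.mk.inj_iff, h2]
        rw [charmatrix_apply_ne _ _ _ hne, charmatrix_apply_ne _ _ _ h2,
          blockDiagonal'_apply_eq]
    · have hne : (⟨p, i⟩ : (j : Fin k) × Fin (n j)) ≠ ⟨q, i'⟩ := by
        simp [Sigma.mk.inj_iff, h]
      rw [blockDiagonal'_apply_ne _ _ _ h, charmatrix_apply_ne _ _ _ hne,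
        blockDiagonal'_apply_ne _ _ _ h]
      simp
  rw [Matrix.charpoly, h1, (blockTriangular_blockDiagonal' _).det_fintype]
  refine Finset.prod_congr rfl fun a _ => ?_
  have h2 : (blockDiagonal' fun j => charmatrix (D j)).toSquareBlock Sigma.fst a
      = (charmatrix (D a)).submatrix (blockEquiv n a) (blockEquiv n a) := by
    ext x y
    rcases x with ⟨⟨px, ix⟩, hx⟩
    rcases y with ⟨⟨py, iy⟩, hy⟩
    have hx' : px = a := hx
    have hy' : py = a := hy
    subst hx'
    subst hy'
    simp [Matrix.toSquareBlock_def, blockEquiv]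
  rw [h2, det_submatrix_equiv_self, Matrix.charpoly]

def sigmaEquiv (k : ℕ) (n : Fin k → ℕ) :
    (Fin k ⊕ (j : Fin k) × Fin (n j)) ≃ ((j : Fin k) × Fin (n j + 1)) where
  toFun := Sum.elim (fun p => ⟨p, 0⟩) (fun x => ⟨x.1, x.2.succ⟩)
  invFun x := Fin.cases (Sum.inl x.1) (fun i => Sum.inr ⟨x.1, i⟩) x.2
  left_inv := by rintro (p | ⟨p, i⟩) <;> simp
  right_inv := by
    rintro ⟨p, i⟩
    induction i using Fin.cases <;> simp

lemma UWU_apply {k : ℕ} {n : Fin k → ℕ} (w : ∀ j, Fin (n j + 1) → ℝ)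
    (ρ : Fin k → Fin k → ℝ) (x y : (j : Fin k) × Fin (n j + 1)) :
    ((Matrix.of fun (x : (j : Fin k) × Fin (n j + 1)) q => if x.1 = q then w x.1 x.2 else 0)
        * Matrix.of ρ *
      (Matrix.of fun (x : (j : Fin k) × Fin (n j + 1)) q => if x.1 = q then w x.1 x.2 else 0)ᵀ)
        x y
      = ρ x.1 y.1 * w x.1 x.2 * w y.1 y.2 := by
  rw [Matrix.mul_apply]
  have h1 : ∀ b, ((Matrix.of fun (x : (j : Fin k) × Fin (n j + 1)) q =>
      if x.1 = q then w x.1 x.2 else 0) * Matrix.of ρ) x b = ρ x.1 b * w x.1 x.2 := by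
    intro b
    rw [Matrix.mul_apply, Finset.sum_eq_single x.1]
    · simp [mul_comm]
    · intro a _ ha
      simp [Ne.symm ha]
    · simp
  simp_rw [h1, transpose_apply, Matrix.of_apply]
  rw [Finset.sum_eq_single y.1]
  · simp [mul_comm]
  · intro a _ ha
    simp [Ne.symm ha]
  · simp

/-- Symmetric version of the main theorem: `A_j` symmetric, `ρ_{qp} = ρ_{pq}`. -/
theorem stmt_5 (k : ℕ) (n : Fin k → ℕ)
    (A : ∀ j, Matrix (Fin (n j + 1)) (Fin (n j + 1)) ℝ)
    (hA : ∀ j, (A j).IsSymm)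
    (lam1 : Fin k → ℝ)
    (μ : ∀ j, Fin (n j) → ℝ)
    (hspec : ∀ j, (A j).charpoly.roots = lam1 j ::ₘ Finset.univ.val.map (μ j))
    (u : ∀ j, Fin (n j + 1) → ℝ)
    (heig : ∀ j, (A j).mulVec (u j) = lam1 j • u j)
    (hnorm : ∀ j, ∑ i, u j i ^ 2 = 1)
    (ρ : Fin k → Fin k → ℝ)
    (hρsymm : ∀ p q, ρ q p = ρ p q)
    (B : Matrix ((j : Fin k) × Fin (n j + 1)) ((j : Fin k) × Fin (n j + 1)) ℝ)
    (hB : ∀ x y : (j : Fin k) × Fin (n j + 1), B x y =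
      (if h : x.1 = y.1 then A x.1 x.2 (Fin.cast (by rw [h]) y.2) else 0)
        + ρ x.1 y.1 * u x.1 x.2 * u y.1 y.2)
    (Bhat : Matrix (Fin k) (Fin k) ℝ)
    (hBhat : ∀ p q : Fin k, Bhat p q = (if p = q then lam1 p else 0) + ρ p q) :
    B.charpoly.roots
      = Bhat.charpoly.roots
        + Finset.univ.val.bind fun j : Fin k => Finset.univ.val.map (μ j) := by
  classical
  choose Q hQ hQcol hMsymm hMcol hroots using fun j =>
    block_reduce (n j) (A j) (hA j) (lam1 j) (u j) (heig j) (hnorm j)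
  let M : ∀ j, Matrix (Fin (n j + 1)) (Fin (n j + 1)) ℝ := fun j => (Q j)ᵀ * A j * Q j
  let Cm : ∀ j, Matrix (Fin (n j)) (Fin (n j)) ℝ := fun j => (M j).submatrix Fin.succ Fin.succ
  have hMsymm' : ∀ j, (M j).IsSymm := hMsymm
  have hMcol' : ∀ j i, M j i 0 = if i = 0 then lam1 j else 0 := hMcol
  have hroots' : ∀ j, (A j).charpoly.roots = lam1 j ::ₘ (Cm j).charpoly.roots := hroots
  have hCroots : ∀ j, (Cm j).charpoly.roots = Finset.univ.val.map (μ j) :=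
    fun j => (Multiset.cons_inj_right _).mp ((hroots' j).symm.trans (hspec j))
  let QQ := blockDiagonal' Q
  have hQQT : QQᵀ = blockDiagonal' (fun j => (Q j)ᵀ) := blockDiagonal'_transpose Q
  have e2 : blockDiagonal' (fun j => (Q j)ᵀ * Q j)
      = blockDiagonal' (fun j => (Q j)ᵀ) * blockDiagonal' Q := blockDiagonal'_mul _ _
  have hQQ : QQᵀ * QQ = 1 := by
    rw [hQQT]
    refine Eq.trans (e2.symm) ?_
    rw [show (fun j => (Q j)ᵀ * Q j)
        = (fun j => (1 : Matrix (Fin (n j + 1)) (Fin (n j + 1)) ℝ)) from funext hQ]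
    exact blockDiagonal'_one
  let U : Matrix ((j : Fin k) × Fin (n j + 1)) (Fin k) ℝ :=
    Matrix.of fun x q => if x.1 = q then u x.1 x.2 else 0
  let w0 : ∀ j, Fin (n j + 1) → ℝ := fun j i => if i = 0 then 1 else 0
  let E : Matrix ((j : Fin k) × Fin (n j + 1)) (Fin k) ℝ :=
    Matrix.of fun x q => if x.1 = q then w0 x.1 x.2 else 0
  have hEWE : ∀ x y, (E * Matrix.of ρ * Eᵀ) x y = ρ x.1 y.1 * w0 x.1 x.2 * w0 y.1 y.2 :=
    fun x y => UWU_apply w0 ρ x y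
  have hBdec : B = blockDiagonal' A + U * Matrix.of ρ * Uᵀ := by
    ext x y
    rcases x with ⟨p, i⟩
    rcases y with ⟨q, i'⟩
    rw [Matrix.add_apply, hB ⟨p, i⟩ ⟨q, i'⟩, UWU_apply u ρ ⟨p, i⟩ ⟨q, i'⟩,
      blockDiagonal'_apply]
    congr 1
    by_cases h : p = q
    · subst h
      rw [dif_pos rfl, dif_pos rfl, cast_eq]
      exact congrArg _ (Fin.val_injective rfl)
    · rw [dif_neg h, dif_neg h]
  have hE : QQᵀ * U = E := by
    ext x q
    rcases x with ⟨p, i⟩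
    rw [Matrix.mul_apply, ← Finset.univ_sigma_univ, Finset.sum_sigma]
    rw [Finset.sum_eq_single p]
    · have hterm : ∀ s : Fin (n p + 1),
          QQᵀ (⟨p, i⟩ : (j : Fin k) × Fin (n j + 1)) ⟨p, s⟩ = Q p s i := by
        intro s
        rw [hQQT, blockDiagonal'_apply_eq]
        rfl
      simp_rw [hterm]
      show (∑ s, Q p s i * (if p = q then u p s else 0)) = (if p = q then w0 p i else 0)
      by_cases hpq : p = q
      · subst hpq
        simp only [eq_self_iff_true, if_true]
        have h2 := congrFun (congrFun (hQ p) i) 0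
        rw [Matrix.mul_apply] at h2
        simp only [transpose_apply] at h2
        rw [show (∑ s, Q p s i * u p s) = ∑ s, Q p s i * Q p s 0 from
          Finset.sum_congr rfl fun s _ => by rw [hQcol p s], h2, Matrix.one_apply]
      · simp [hpq]
    · intro a _ ha
      apply Finset.sum_eq_zero
      intro s _
      rw [hQQT, blockDiagonal'_apply_ne _ _ _ (Ne.symm ha), zero_mul]
    · simp
  have hB' : QQᵀ * B * QQ = blockDiagonal' M + E * Matrix.of ρ * Eᵀ := by
    rw [hBdec, Matrix.mul_add, Matrix.add_mul]
    congr 1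
    · have e1 : blockDiagonal' (fun j => (Q j)ᵀ * A j * Q j)
          = blockDiagonal' (fun j => (Q j)ᵀ * A j) * blockDiagonal' Q := blockDiagonal'_mul _ _
      have e3 : blockDiagonal' (fun j => (Q j)ᵀ * A j)
          = blockDiagonal' (fun j => (Q j)ᵀ) * blockDiagonal' A := blockDiagonal'_mul _ _
      rw [hQQT, ← e3]
      exact e1.symm
    · rw [← hE, transpose_mul, transpose_transpose]
      simp only [Matrix.mul_assoc]
  have hconj : (QQᵀ * B * QQ).charpoly = B.charpoly := charpoly_conj QQ B hQQ
  have hsub : (QQᵀ * B * QQ).submatrix (sigmaEquiv k n) (sigmaEquiv k n)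
      = fromBlocks Bhat 0 0 (blockDiagonal' Cm) := by
    rw [hB']
    ext x y
    rcases x with p | ⟨p, i⟩ <;> rcases y with q | ⟨q, i'⟩ <;>
      simp only [submatrix_apply, Matrix.add_apply, sigmaEquiv, Equiv.coe_fn_mk,
        Sum.elim_inl, Sum.elim_inr, fromBlocks_apply₁₁, fromBlocks_apply₁₂,
        fromBlocks_apply₂₁, fromBlocks_apply₂₂, Matrix.zero_apply, hEWE]
    · rw [hBhat]
      have hw : w0 p (0 : Fin (n p + 1)) = 1 := if_pos rfl
      have hw' : w0 q (0 : Fin (n q + 1)) = 1 := if_pos rfl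
      rw [hw, hw']
      by_cases h : p = q
      · subst h
        rw [blockDiagonal'_apply_eq, hMcol' p 0, if_pos rfl, if_pos rfl]
        simp
      · rw [blockDiagonal'_apply_ne _ _ _ h, if_neg h]
        simp
    · have hw : w0 q i'.succ = 0 := if_neg (Fin.succ_ne_zero i')
      rw [hw, mul_zero]
      by_cases h : p = q
      · subst h
        rw [blockDiagonal'_apply_eq]
        have hs : M p 0 i'.succ = M p i'.succ 0 := (hMsymm' p).apply i'.succ 0
        rw [hs, hMcol' p i'.succ, if_neg (Fin.succ_ne_zero i')]
        simp
      · rw [blockDiagonal'_apply_ne _ _ _ h]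
        simp
    · have hw : w0 p i.succ = 0 := if_neg (Fin.succ_ne_zero i)
      rw [hw]
      by_cases h : p = q
      · subst h
        rw [blockDiagonal'_apply_eq, hMcol' p i.succ, if_neg (Fin.succ_ne_zero i)]
        simp
      · rw [blockDiagonal'_apply_ne _ _ _ h]
        simp
    · have hw : w0 p i.succ = 0 := if_neg (Fin.succ_ne_zero i)
      rw [hw, mul_zero, zero_mul, add_zero]
      by_cases h : p = q
      · subst h
        rw [blockDiagonal'_apply_eq, blockDiagonal'_apply_eq]
        rfl
      · rw [blockDiagonal'_apply_ne _ _ _ h, blockDiagonal'_apply_ne _ _ _ h]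
  have hre : ((QQᵀ * B * QQ).submatrix (sigmaEquiv k n) (sigmaEquiv k n)).charpoly
      = (QQᵀ * B * QQ).charpoly := by
    have := Matrix.charpoly_reindex (R := ℝ) (sigmaEquiv k n).symm (QQᵀ * B * QQ)
    rwa [reindex_apply, Equiv.symm_symm] at this
  have hmain : B.charpoly = Bhat.charpoly * ∏ j, (Cm j).charpoly := by
    rw [← hconj, ← hre, hsub, Matrix.charpoly_fromBlocks_zero₂₁, charpoly_blockDiagonal']
  have hne2 : (∏ j, (Cm j).charpoly) ≠ 0 :=
    (monic_prod_of_monic _ _ fun j _ => (Cm j).charpoly_monic).ne_zero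
  rw [hmain, roots_mul (mul_ne_zero Bhat.charpoly_monic.ne_zero hne2),
    roots_prod _ _ hne2]
  congr 1
  exact congrArg _ (funext hCroots)
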